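/- Let Q and k be positive reals and define g(x,y) = Q·x·y + x(k−x)/2 + y(k−y)/2. If 0 < Q ≤ 1/2, then for all x,y ∈ [0,k] we have g(x,y) ≤ k²/(4(1−Q)), and g(k/(2(1−Q)), k/(2(1−Q))) = k²/(4(1−Q)). If 1/2 < Q < 1, then for all x,y ∈ [0,k] we have g(x,y) ≤ Q·k², and g(k,k) = Q·k². -/
import Mathlib


noncomputable section

namespace PaperStmt

/-- The function `g(x,y) = Q·x·y + x(k−x)/2 + y(k−y)/2`. -/
def gfun (Q k x y : ℝ) : ℝ := Q * x * y + x * (k - x) / 2 + y * (k - y) / 2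

theorem gfun_max (Q k : ℝ) (hQ : 0 < Q) (hk : 0 < k) :
    (Q ≤ 1 / 2 →
      (∀ x ∈ Set.Icc (0 : ℝ) k, ∀ y ∈ Set.Icc (0 : ℝ) k,
        gfun Q k x y ≤ k ^ 2 / (4 * (1 - Q))) ∧
      gfun Q k (k / (2 * (1 - Q))) (k / (2 * (1 - Q))) = k ^ 2 / (4 * (1 - Q))) ∧
    (1 / 2 < Q → Q < 1 →
      (∀ x ∈ Set.Icc (0 : ℝ) k, ∀ y ∈ Set.Icc (0 : ℝ) k,
        gfun Q k x y ≤ Q * k ^ 2) ∧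
      gfun Q k k k = Q * k ^ 2) := by
  constructor
  · intro hQ2
    have h1Q : (0:ℝ) < 1 - Q := by linarith
    constructor
    · rintro x ⟨hx0, hxk⟩ y ⟨hy0, hyk⟩
      rw [gfun, le_div_iff₀ (by positivity : (0:ℝ) < 4 * (1 - Q))]
      nlinarith [sq_nonneg ((1 - Q) * (x + y) - k),
        mul_nonneg (mul_nonneg h1Q.le (by linarith : (0:ℝ) ≤ 1 + Q)) (sq_nonneg (x - y))]
    · rw [gfun]
      field_simp
      ring
  · intro hQ2 hQ1
    constructor
    · rintro x ⟨hx0, hxk⟩ y ⟨hy0, hyk⟩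
      rw [gfun]
      nlinarith [sq_nonneg (k - x), sq_nonneg (k - y), sq_nonneg (x - y),
        mul_nonneg (by linarith : (0:ℝ) ≤ Q - 1/2)
          (by nlinarith : (0:ℝ) ≤ k^2 - x*y)]
    · rw [gfun]; ring
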